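/- arXiv:math/9912072 — 3 statements merged into one kernel-verified Lean document; each statement's English description precedes it below -/
import Mathlib

section
/- Let V = V₁ ⊕ ⋯ ⊕ V_t be a direct sum of K-vector spaces, for each j let m_j : V → V be a linear automorphism with m_j(v) - v ∈ V_j for all v, and let M = m_t ∘ ⋯ ∘ m₁. Let v ∈ V have components (v₁,...,v_t) and let a ∈ K. Then M(v) = a·v if and only if for every k = 1,...,t, (m_k ∘ ⋯ ∘ m₁)(v) has components (a·v₁, ..., a·v_k, v_{k+1}, ..., v_t). -/
def compUpTo {R : Type*} [Field R] {t : ℕ} {V : Fin t → Type*}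
    [∀ i, AddCommGroup (V i)] [∀ i, Module R (V i)]
    (m : Fin t → ((∀ i, V i) ≃ₗ[R] (∀ i, V i))) : ℕ → ((∀ i, V i) ≃ₗ[R] (∀ i, V i))
  | 0 => LinearEquiv.refl R _
  | k + 1 => if h : k < t then (compUpTo m k).trans (m ⟨k, h⟩) else compUpTo m k

section Aux

variable {K : Type*} [Field K] {t : ℕ} {V : Fin t → Type*}
    [∀ i, AddCommGroup (V i)] [∀ i, Module K (V i)]
    (m : Fin t → ((∀ i, V i) ≃ₗ[K] (∀ i, V i)))

lemma step_eq (hm : ∀ j : Fin t, ∀ v : ∀ i, V i, ∀ i, i ≠ j → (m j v - v) i = 0)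
    (j : Fin t) (w : ∀ i, V i) (i : Fin t) (h : i ≠ j) :
    m j w i = w i := by
  have h0 : (m j w) i - w i = 0 := hm j w i h
  exact sub_eq_zero.mp h0

lemma lemA (hm : ∀ j : Fin t, ∀ v : ∀ i, V i, ∀ i, i ≠ j → (m j v - v) i = 0)
    (v : ∀ i, V i) : ∀ n (i : Fin t), n ≤ i.val → compUpTo m n v i = v i := by
  intro n
  induction n with
  | zero => intro i _; rfl
  | succ n ih =>
    intro i hi
    by_cases h : n < t
    · simp only [compUpTo, dif_pos h, LinearEquiv.trans_apply]
      rw [step_eq m hm ⟨n, h⟩ _ i (by simp only [ne_eq, Fin.ext_iff]; omega)]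
      exact ih i (by omega)
    · simp only [compUpTo, dif_neg h]
      exact ih i (by omega)

lemma lemB (hm : ∀ j : Fin t, ∀ v : ∀ i, V i, ∀ i, i ≠ j → (m j v - v) i = 0)
    (v : ∀ i, V i) (i : Fin t) :
    ∀ n, i.val + 1 ≤ n → compUpTo m n v i = compUpTo m (i.val + 1) v i := by
  intro n
  induction n with
  | zero => intro h; omega
  | succ n ih =>
    intro h
    rcases eq_or_lt_of_le h with he | hl
    · rw [he]
    · have hn : i.val + 1 ≤ n := by omega
      by_cases ht : n < t
      · simp only [compUpTo, dif_pos ht, LinearEquiv.trans_apply]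
        rw [step_eq m hm ⟨n, ht⟩ _ i (by simp only [ne_eq, Fin.ext_iff]; omega)]
        exact ih hn
      · simp only [compUpTo, dif_neg ht]
        exact ih hn

end Aux

/-- M v = a • v iff each partial product multiplies the first components by a and
leaves the remaining components unchanged. -/
theorem stmt4 {K : Type*} [Field K] {t : ℕ} {V : Fin t → Type*}
    [∀ i, AddCommGroup (V i)] [∀ i, Module K (V i)]
    (m : Fin t → ((∀ i, V i) ≃ₗ[K] (∀ i, V i)))
    (hm : ∀ j : Fin t, ∀ v : ∀ i, V i, ∀ i, i ≠ j → (m j v - v) i = 0)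
    (v : ∀ i, V i) (a : K) :
    compUpTo m t v = a • v ↔
      ∀ k : Fin t, ∀ i : Fin t,
        (compUpTo m (k.val + 1) v) i = if i ≤ k then a • v i else v i := by
  constructor
  · intro hMv k i
    by_cases hik : i ≤ k
    · rw [if_pos hik]
      have h1 : compUpTo m (k.val + 1) v i = compUpTo m (i.val + 1) v i :=
        lemB m hm v i _ (by omega)
      have h2 : compUpTo m t v i = compUpTo m (i.val + 1) v i :=
        lemB m hm v i _ (by omega)
      rw [h1, ← h2, hMv]
      rfl
    · rw [if_neg hik]
      exact lemA m hm v _ i (by simp only [Fin.le_def, not_le] at hik; omega)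
  · intro hk
    funext i
    have h2 : compUpTo m t v i = compUpTo m (i.val + 1) v i :=
      lemB m hm v i _ (by omega)
    rw [h2, hk i i, if_pos le_rfl]
    rfl
end

section
/- Let V = V₁ ⊕ ⋯ ⊕ V_t be a direct sum of K-vector spaces, for each j let m_j be an automorphism of V with (m_j - id)(V) ⊆ V_j, and let M = m_t ∘ ⋯ ∘ m₁. Then Im(M - id) ⊆ V₁ + ⋯ + V_t = V, and more usefully: a vector v is fixed by M if and only if for each k, the 'partial variation' p_k(m_k(w_k) - w_k) vanishes where w_k = (m_{k-1} ∘ ⋯ ∘ m₁)(v); equivalently, v is fixed by M if and only if m_k(w_k) = w_k for all k, which in turn forces w_k = v for all k. -/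
section aux

variable {K : Type*} [Field K] {t : ℕ} {V : Fin t → Type*}
    [∀ i, AddCommGroup (V i)] [∀ i, Module K (V i)]
    (m : Fin t → ((∀ i, V i) ≃ₗ[K] (∀ i, V i)))

lemma compUpTo_succ {k : ℕ} (h : k < t) (v : ∀ i, V i) :
    compUpTo m (k + 1) v = m ⟨k, h⟩ (compUpTo m k v) := by
  simp [compUpTo, dif_pos h]

lemma compUpTo_succ_of_ge {k : ℕ} (h : ¬ k < t) (v : ∀ i, V i) :
    compUpTo m (k + 1) v = compUpTo m k v := by
  simp [compUpTo, dif_neg h]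

variable (hm : ∀ j : Fin t, ∀ v : ∀ i, V i, ∀ i, i ≠ j → (m j v - v) i = 0)

include hm

lemma mj_apply_ne {j : Fin t} (v : ∀ i, V i) {i : Fin t} (hij : i ≠ j) :
    m j v i = v i := by
  have h := hm j v i hij
  have h2 : (m j v - v) i = m j v i - v i := rfl
  rw [h2] at h
  exact sub_eq_zero.mp h

/-- coordinates ≥ k are untouched by the first k maps -/
lemma coord_hi (v : ∀ i, V i) : ∀ (k : ℕ) (j : Fin t), k ≤ j.val →
    compUpTo m k v j = v j := by
  intro k
  induction k with
  | zero => intro j _; rfl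
  | succ k ih =>
    intro j hk
    have hkt : k < t := lt_of_lt_of_le (Nat.lt_of_succ_le hk) j.isLt.le
    rw [compUpTo_succ m hkt v]
    have hne : j ≠ ⟨k, hkt⟩ := by
      intro h
      rw [h] at hk
      exact Nat.not_succ_le_self k hk
    rw [mj_apply_ne m hm _ hne]
    exact ih j (Nat.le_of_succ_le hk)

/-- coordinate j is fixed after step j+1 -/
lemma coord_lo (v : ∀ i, V i) : ∀ (k : ℕ) (j : Fin t), j.val < k →
    compUpTo m k v j = compUpTo m (j.val + 1) v j := by
  intro k
  induction k with
  | zero => intro j h; exact absurd h (Nat.not_lt_zero _)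
  | succ k ih =>
    intro j hj
    rcases Nat.lt_or_ge j.val k with h | h
    · by_cases hkt : k < t
      · rw [compUpTo_succ m hkt v]
        have hne : j ≠ ⟨k, hkt⟩ := by
          intro he; rw [he] at h; exact lt_irrefl k h
        rw [mj_apply_ne m hm _ hne]
        exact ih j h
      · rw [compUpTo_succ_of_ge m hkt v]
        exact ih j h
    · have : j.val = k := le_antisymm (Nat.lt_succ_iff.mp hj) h
      subst this
      rfl

omit hm in
/-- if each m_k fixes w_k then every w_k = v -/
lemma all_fixed (v : ∀ i, V i)
    (hfix : ∀ k : Fin t, m k (compUpTo m k.val v) = compUpTo m k.val v) :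
    ∀ k : ℕ, compUpTo m k v = v := by
  intro k
  induction k with
  | zero => rfl
  | succ k ih =>
    by_cases hkt : k < t
    · rw [compUpTo_succ m hkt v]
      have := hfix ⟨k, hkt⟩
      simp only at this
      rw [this, ih]
    · rw [compUpTo_succ_of_ge m hkt v, ih]

/-- the k-th coordinate of the total variation equals the k-th partial variation -/
lemma variation_eq (v : ∀ i, V i) (k : Fin t) :
    compUpTo m t v k - v k
      = m k (compUpTo m k.val v) k - compUpTo m k.val v k := by
  rw [coord_lo m hm v t k k.isLt, compUpTo_succ m k.isLt v, Fin.eta,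
    coord_hi m hm v k.val k le_rfl]

end aux

/-- v is fixed by M iff each partial variation vanishes, iff each m_k fixes
w_k = (m_{k-1} ∘ ⋯ ∘ m₁) v; and then w_k = v for all k. -/
theorem stmt15 {K : Type*} [Field K] {t : ℕ} {V : Fin t → Type*}
    [∀ i, AddCommGroup (V i)] [∀ i, Module K (V i)]
    (m : Fin t → ((∀ i, V i) ≃ₗ[K] (∀ i, V i)))
    (hm : ∀ j : Fin t, ∀ v : ∀ i, V i, ∀ i, i ≠ j → (m j v - v) i = 0) :
    ∀ v : ∀ i, V i,
      (compUpTo m t v = v ↔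
        ∀ k : Fin t, (m k (compUpTo m k.val v) - compUpTo m k.val v) k = 0) ∧
      (compUpTo m t v = v ↔
        ∀ k : Fin t, m k (compUpTo m k.val v) = compUpTo m k.val v) ∧
      (compUpTo m t v = v → ∀ k : Fin t, compUpTo m k.val v = v) := by
  intro v
  -- partial variation zero ↔ m_k fixes w_k, pointwise equivalences
  have key : ∀ k : Fin t,
      ((m k (compUpTo m k.val v) - compUpTo m k.val v) k = 0 ↔
        m k (compUpTo m k.val v) = compUpTo m k.val v) := by
    intro k
    constructor
    · intro h
      funext i
      by_cases hik : i = k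
      · subst hik
        have h2 : (m i (compUpTo m i.val v) - compUpTo m i.val v) i
            = m i (compUpTo m i.val v) i - compUpTo m i.val v i := rfl
        rw [h2] at h
        exact sub_eq_zero.mp h
      · exact mj_apply_ne m hm _ hik
    · intro h
      rw [h]
      simp
  have fwd : compUpTo m t v = v →
      ∀ k : Fin t, (m k (compUpTo m k.val v) - compUpTo m k.val v) k = 0 := by
    intro h k
    have h1 : compUpTo m t v k - v k = 0 := by rw [h]; simp
    rw [variation_eq m hm v k] at h1
    have h2 : (m k (compUpTo m k.val v) - compUpTo m k.val v) k
        = m k (compUpTo m k.val v) k - compUpTo m k.val v k := rfl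
    rw [h2, h1]
  have bwd : (∀ k : Fin t, m k (compUpTo m k.val v) = compUpTo m k.val v) →
      compUpTo m t v = v := by
    intro h
    exact all_fixed m v h t
  refine ⟨⟨fwd, fun h => bwd (fun k => (key k).mp (h k))⟩,
    ⟨fun h k => (key k).mp (fwd h k), bwd⟩,
    fun h k => all_fixed m v (fun k => (key k).mp (fwd h k)) k.val⟩
end

section
/- Let A be an invertible t×t block matrix over a field K (with blocks indexed by a decomposition V = V₁ ⊕ ⋯ ⊕ V_t), and suppose A = A_t ⋯ A₁ where each A_j is an invertible block matrix equal to the identity except possibly in its j-th block row. Then the factors A_j are uniquely determined by A: if also A = B_t ⋯ B₁ with each B_j invertible and equal to the identity except in its j-th block row, then A_j = B_j for all j. -/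
lemma compUpTo_apply_lt {K : Type*} [Field K] {t : ℕ} {V : Fin t → Type*}
    [∀ i, AddCommGroup (V i)] [∀ i, Module K (V i)]
    (A : Fin t → ((∀ i, V i) ≃ₗ[K] (∀ i, V i)))
    (hA : ∀ j : Fin t, ∀ v : ∀ i, V i, ∀ i, i ≠ j → (A j v) i = v i)
    (k : ℕ) (n : ℕ) (hkn : k ≤ n) (v : ∀ i, V i) (i : Fin t) (hi : i.val < k) :
    (compUpTo A n v) i = (compUpTo A k v) i := by
  induction n with
  | zero =>
      have : k = 0 := Nat.le_zero.mp hkn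
      subst this; rfl
  | succ n ih =>
      rcases Nat.eq_or_lt_of_le hkn with hkn' | hkn'
      · subst hkn'; rfl
      · have hkn'' : k ≤ n := Nat.lt_succ_iff.mp hkn'
        simp only [compUpTo]
        split_ifs with ht
        · rw [LinearEquiv.trans_apply]
          rw [hA ⟨n, ht⟩ (compUpTo A n v) i (by
            intro hcon
            apply absurd hi
            simp [hcon]
            omega)]
          exact ih hkn''
        · exact ih hkn''

lemma compUpTo_congr {K : Type*} [Field K] {t : ℕ} {V : Fin t → Type*}
    [∀ i, AddCommGroup (V i)] [∀ i, Module K (V i)]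
    (A B : Fin t → ((∀ i, V i) ≃ₗ[K] (∀ i, V i)))
    (k : ℕ) (h : ∀ m (_ : m < k) (ht : m < t), A ⟨m, ht⟩ = B ⟨m, ht⟩) :
    compUpTo A k = compUpTo B k := by
  induction k with
  | zero => rfl
  | succ k ih =>
      simp only [compUpTo]
      rw [ih (fun m hm ht => h m (Nat.lt_succ_of_lt hm) ht)]
      split_ifs with ht
      · rw [h k (Nat.lt_succ_self k) ht]
      · rfl

/-- Uniqueness of the factorization of an invertible block operator into invertible
factors each equal to the identity outside its own block row. -/
theorem stmt19 {K : Type*} [Field K] {t : ℕ} {V : Fin t → Type*}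
    [∀ i, AddCommGroup (V i)] [∀ i, Module K (V i)]
    [∀ i, FiniteDimensional K (V i)]
    (A B : Fin t → ((∀ i, V i) ≃ₗ[K] (∀ i, V i)))
    (hA : ∀ j : Fin t, ∀ v : ∀ i, V i, ∀ i, i ≠ j → (A j v) i = v i)
    (hB : ∀ j : Fin t, ∀ v : ∀ i, V i, ∀ i, i ≠ j → (B j v) i = v i)
    (h : compUpTo A t = compUpTo B t) :
    ∀ j, A j = B j := by
  have key : ∀ n : ℕ, ∀ hn : n < t, A ⟨n, hn⟩ = B ⟨n, hn⟩ := by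
    intro n
    induction n using Nat.strong_induction_on with
    | _ n IH =>
      intro hn
      have hP : compUpTo A n = compUpTo B n :=
        compUpTo_congr A B n (fun m hm ht => IH m hm ht)
      apply LinearEquiv.toLinearMap_injective
      apply LinearMap.ext
      intro w
      obtain ⟨v, hv⟩ := (compUpTo A n).surjective w
      have hv' : compUpTo B n v = w := by rw [← hP]; exact hv
      funext i
      by_cases hij : i = ⟨n, hn⟩
      · subst hij
        have h1 : (A ⟨n, hn⟩ w) ⟨n, hn⟩ = (compUpTo A (n+1) v) ⟨n, hn⟩ := by
          simp only [compUpTo, dif_pos hn, LinearEquiv.trans_apply, hv]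
        have h2 : (B ⟨n, hn⟩ w) ⟨n, hn⟩ = (compUpTo B (n+1) v) ⟨n, hn⟩ := by
          simp only [compUpTo, dif_pos hn, LinearEquiv.trans_apply, hv']
        have h3 : (compUpTo A t v) ⟨n, hn⟩ = (compUpTo A (n+1) v) ⟨n, hn⟩ :=
          compUpTo_apply_lt A hA (n+1) t hn v ⟨n, hn⟩ (Nat.lt_succ_self n)
        have h4 : (compUpTo B t v) ⟨n, hn⟩ = (compUpTo B (n+1) v) ⟨n, hn⟩ :=
          compUpTo_apply_lt B hB (n+1) t hn v ⟨n, hn⟩ (Nat.lt_succ_self n)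
        simp only [LinearEquiv.coe_coe]
        rw [h1, h2, ← h3, ← h4, h]
      · simp only [LinearEquiv.coe_coe]
        rw [hA ⟨n, hn⟩ w i hij, hB ⟨n, hn⟩ w i hij]
  intro j
  have := key j.val j.isLt
  simpa using this
end
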